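/- Let f : ℝⁿ → ℝ be twice continuously differentiable with L₂-Lipschitz Hessian, let x ∈ ℝⁿ, g = ∇f(x), H = ∇²f(x), and for σ > 0 let m(s) = f(x) + gᵀs + (1/2)sᵀHs + (σ/3)‖s‖³, whose gradient is ∇m(s) = g + Hs + σ‖s‖s. If s ∈ ℝⁿ satisfies ‖∇m(s)‖ ≤ (θ₁/2)‖s‖² for some θ₁ > 0, then ‖∇f(x+s)‖ ≤ ((L₂ + θ₁)/2 + σ)‖s‖². -/

import Mathlib

open RealInnerProductSpace

/-- Gradient bound after an approximate cubic-model minimization step: if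
`‖∇m(s)‖ ≤ (θ₁/2)‖s‖²`, where `∇m(s) = g + Hs + σ‖s‖s`, then
`‖∇f(x+s)‖ ≤ ((L₂ + θ₁)/2 + σ)‖s‖²`. -/
theorem gradient_bound_cubic_model_step
    (n : ℕ) (f : EuclideanSpace ℝ (Fin n) → ℝ) (L₂ : ℝ) (hL₂ : 0 < L₂)
    (hf : ContDiff ℝ 2 f)
    (hLip : ∀ y z : EuclideanSpace ℝ (Fin n),
      ‖fderiv ℝ (gradient f) y - fderiv ℝ (gradient f) z‖ ≤ L₂ * ‖y - z‖)
    (x : EuclideanSpace ℝ (Fin n))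
    (σ θ₁ : ℝ) (hσ : 0 < σ) (hθ₁ : 0 < θ₁)
    (s : EuclideanSpace ℝ (Fin n))
    (hgradm : ‖gradient f x + fderiv ℝ (gradient f) x s + (σ * ‖s‖) • s‖ ≤ θ₁ / 2 * ‖s‖ ^ 2) :
    ‖gradient f (x + s)‖ ≤ ((L₂ + θ₁) / 2 + σ) * ‖s‖ ^ 2 := by
  set G := gradient f with hG
  -- G is C¹
  have hG1 : ContDiff ℝ 1 G := by
    have h1 : ContDiff ℝ 1 (fderiv ℝ f) := hf.fderiv_right (by norm_num)
    have : G = fun y => (InnerProductSpace.toDual ℝ (EuclideanSpace ℝ (Fin n))).symm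
        (fderiv ℝ f y) := rfl
    rw [this]
    exact (InnerProductSpace.toDual ℝ
      (EuclideanSpace ℝ (Fin n))).symm.contDiff.comp h1
  have hGdiff : ∀ y, DifferentiableAt ℝ G y := fun y =>
    (hG1.differentiable one_ne_zero).differentiableAt
  set H := fderiv ℝ G x with hH
  -- define φ t = G (x + t • s) - G x - t • (H s)
  set φ : ℝ → EuclideanSpace ℝ (Fin n) := fun t => G (x + t • s) - G x - t • (H s) with hφ
  have hφderiv : ∀ t : ℝ, HasDerivAt φ ((fderiv ℝ G (x + t • s)) s - H s) t := by
    intro t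
    have h1 : HasDerivAt (fun t : ℝ => x + t • s) s t := by
      simpa using ((hasDerivAt_id t).smul_const s).const_add x
    have h2 : HasDerivAt (fun t : ℝ => G (x + t • s)) ((fderiv ℝ G (x + t • s)) s) t :=
      by have := (hGdiff (x + t • s)).hasFDerivAt.comp_hasDerivAt t h1; exact this
    have := (h2.sub_const (G x)).sub ((hasDerivAt_id t).smul_const (H s)); rw [one_smul] at this; exact this
  -- key Taylor bound: ‖φ 1‖ ≤ L₂/2 * ‖s‖²
  have key : ‖φ 1‖ ≤ L₂ / 2 * ‖s‖ ^ 2 := by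
    have hB : ∀ t : ℝ, HasDerivAt (fun t => L₂ * ‖s‖ ^ 2 / 2 * t ^ 2)
        (L₂ * ‖s‖ ^ 2 * t) t := by
      intro t
      have := (hasDerivAt_pow 2 t).const_mul (L₂ * ‖s‖ ^ 2 / 2)
      exact this.congr_deriv (by push_cast; ring)
    have bound : ∀ t ∈ Set.Ico (0:ℝ) 1,
        ‖(fderiv ℝ G (x + t • s)) s - H s‖ ≤ L₂ * ‖s‖ ^ 2 * t := by
      intro t ht
      have h1 : ‖(fderiv ℝ G (x + t • s)) s - H s‖
          ≤ ‖fderiv ℝ G (x + t • s) - H‖ * ‖s‖ := by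
        have h := (fderiv ℝ G (x + t • s) - H).le_opNorm s
        rwa [ContinuousLinearMap.sub_apply] at h
      have h2 : ‖fderiv ℝ G (x + t • s) - H‖ ≤ L₂ * (t * ‖s‖) := by
        have h := hLip (x + t • s) x
        have he : x + t • s - x = t • s := by abel
        rwa [he, norm_smul, Real.norm_eq_abs, abs_of_nonneg ht.1] at h
      calc ‖(fderiv ℝ G (x + t • s)) s - H s‖ ≤ L₂ * (t * ‖s‖) * ‖s‖ :=
            h1.trans (by
              have : (0:ℝ) ≤ ‖s‖ := norm_nonneg s
              nlinarith)
        _ = L₂ * ‖s‖ ^ 2 * t := by ring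
    have hφ0 : ‖φ 0‖ ≤ L₂ * ‖s‖ ^ 2 / 2 * 0 ^ 2 := by simp [hφ]
    have := image_norm_le_of_norm_deriv_right_le_deriv_boundary
      (f := φ) (a := (0:ℝ)) (b := 1)
      (fun t _ => (hφderiv t).continuousAt.continuousWithinAt)
      (fun t ht => (hφderiv t).hasDerivWithinAt)
      hφ0 hB bound (Set.right_mem_Icc.2 zero_le_one)
    calc ‖φ 1‖ ≤ L₂ * ‖s‖ ^ 2 / 2 * 1 ^ 2 := this
      _ = L₂ / 2 * ‖s‖ ^ 2 := by ring
  -- assemble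
  have hdecomp : G (x + s) = φ 1 + (G x + H s + (σ * ‖s‖) • s) - (σ * ‖s‖) • s := by
    simp [hφ]
    abel
  have hσs : ‖(σ * ‖s‖) • s‖ = σ * ‖s‖ ^ 2 := by
    rw [norm_smul, Real.norm_eq_abs, abs_of_nonneg (by positivity)]
    ring
  calc ‖G (x + s)‖ = ‖φ 1 + (G x + H s + (σ * ‖s‖) • s) - (σ * ‖s‖) • s‖ := by
        rw [hdecomp]
    _ ≤ ‖φ 1 + (G x + H s + (σ * ‖s‖) • s)‖ + ‖(σ * ‖s‖) • s‖ := norm_sub_le _ _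
    _ ≤ ‖φ 1‖ + ‖G x + H s + (σ * ‖s‖) • s‖ + ‖(σ * ‖s‖) • s‖ := by
        gcongr; exact norm_add_le _ _
    _ ≤ L₂ / 2 * ‖s‖ ^ 2 + θ₁ / 2 * ‖s‖ ^ 2 + σ * ‖s‖ ^ 2 := by
        rw [hσs]; gcongr
    _ = ((L₂ + θ₁) / 2 + σ) * ‖s‖ ^ 2 := by ring
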